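/- arXiv:2406.03889 — 4 statements merged into one kernel-verified Lean document; each statement's English description precedes it below -/
import Mathlib

section
/- Let q > 0 and define, for a, b ∈ ℝ, h(a,b) := q ∫_b^a |s|^{q−1}(s − b) ds. Then there exists a constant γ = γ(q) > 0 such that for all a, b ∈ ℝ one has (1/γ)·(|a| + |b|)^{q−1} |a − b|² ≤ h(a,b) ≤ γ·(|a| + |b|)^{q−1} |a − b|². -/
open intervalIntegral MeasureTheory Set

namespace HTSBAux

lemma absInt {r : ℝ} (hr : -1 < r) (a b : ℝ) :
    IntervalIntegrable (fun s : ℝ => |s| ^ r) volume a b := by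
  suffices h : ∀ c : ℝ, IntervalIntegrable (fun s : ℝ => |s| ^ r) volume 0 c from
    (h a).symm.trans (h b)
  have hpos : ∀ c : ℝ, 0 ≤ c → IntervalIntegrable (fun s : ℝ => |s| ^ r) volume 0 c := by
    intro c hc
    refine (intervalIntegrable_rpow' (a := 0) (b := c) hr).congr ?_
    intro x hx; beta_reduce
    rw [uIoc_of_le hc] at hx
    rw [abs_of_pos hx.1]
  intro c
  rcases le_total 0 c with hc | hc
  · exact hpos c hc
  · have h2 := (IntervalIntegrable.iff_comp_neg).mp (hpos (-c) (by linarith))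
    simp only [abs_neg, neg_zero, neg_neg] at h2
    exact h2

lemma fInt {q : ℝ} (hq : 0 < q) (b c d : ℝ) :
    IntervalIntegrable (fun s : ℝ => |s| ^ (q - 1) * (s - b)) volume c d :=
  (absInt (by linarith) c d).mul_continuousOn
    ((continuous_id.sub continuous_const).continuousOn)

lemma phi {q : ℝ} (hq : 0 < q) {c : ℝ} (hc : 0 ≤ c) :
    ∫ s in (0:ℝ)..c, |s| ^ (q - 1) = c ^ q / q := by
  rw [integral_congr (g := fun s : ℝ => s ^ (q - 1))
      (fun x hx => by rw [uIcc_of_le hc] at hx; simp [abs_of_nonneg hx.1])]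
  rw [integral_rpow (Or.inl (by linarith))]
  have h1 : q - 1 + 1 = q := by ring
  rw [h1, Real.zero_rpow (ne_of_gt hq)]
  ring

lemma phineg {q : ℝ} (hq : 0 < q) {c : ℝ} (hc : c ≤ 0) :
    ∫ s in c..(0:ℝ), |s| ^ (q - 1) = (-c) ^ q / q := by
  have h := intervalIntegral.integral_comp_neg (a := (0:ℝ)) (b := -c)
      (fun s : ℝ => |s| ^ (q - 1))
  simp only [abs_neg, neg_neg, neg_zero] at h
  rw [← h, phi hq (by linarith)]

lemma flip (q a b : ℝ) :
    (∫ s in b..a, |s| ^ (q - 1) * (s - b)) =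
      ∫ s in (-b)..(-a), |s| ^ (q - 1) * (s - (-b)) := by
  have h := intervalIntegral.integral_comp_neg (a := a) (b := b)
      (fun x : ℝ => |x| ^ (q - 1) * (x - (-b)))
  rw [← h]
  have h2 : ∀ x : ℝ, |(-x)| ^ (q - 1) * (-x - -b) = -(|x| ^ (q - 1) * (x - b)) := by
    intro x; rw [abs_neg]; ring
  rw [intervalIntegral.integral_congr (g := fun x : ℝ => -(|x| ^ (q - 1) * (x - b)))
      (fun x _ => h2 x)]
  rw [intervalIntegral.integral_neg, ← intervalIntegral.integral_symm]

lemma lin (b c d : ℝ) : ∫ s in c..d, (s - b) = (d ^ 2 - c ^ 2) / 2 - (d - c) * b := by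
  rw [intervalIntegral.integral_sub intervalIntegrable_id intervalIntegrable_const,
    integral_id, intervalIntegral.integral_const, smul_eq_mul]

set_option maxHeartbeats 2000000 in
lemma key {q : ℝ} (hq : 0 < q) {a b : ℝ} (hab : b ≤ a) :
    (1 / ((32 * (4:ℝ) ^ (q - 1) + 32 * (4:ℝ) ^ (1 - q) + 32) * (q + q⁻¹))) *
        ((|a| + |b|) ^ (q - 1) * |a - b| ^ 2)
      ≤ q * ∫ s in b..a, |s| ^ (q - 1) * (s - b) ∧
    q * (∫ s in b..a, |s| ^ (q - 1) * (s - b))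
      ≤ ((32 * (4:ℝ) ^ (q - 1) + 32 * (4:ℝ) ^ (1 - q) + 32) * (q + q⁻¹)) *
        ((|a| + |b|) ^ (q - 1) * |a - b| ^ 2) := by
  have h4 : (0:ℝ) < 4 := by norm_num
  set A : ℝ := (4:ℝ) ^ (q - 1) with hAdef
  set B : ℝ := (4:ℝ) ^ (1 - q) with hBdef
  have hA : 0 < A := Real.rpow_pos_of_pos h4 _
  have hB : 0 < B := Real.rpow_pos_of_pos h4 _
  have hAB : A * B = 1 := by
    rw [hAdef, hBdef, ← Real.rpow_add h4]; norm_num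
  have hqi : 0 < q⁻¹ := inv_pos.mpr hq
  have hqq : q * q⁻¹ = 1 := mul_inv_cancel₀ (ne_of_gt hq)
  clear_value A B
  set γ : ℝ := (32 * A + 32 * B + 32) * (q + q⁻¹) with hγdef
  have hγ : 0 < γ := by
    rw [hγdef]
    exact mul_pos (by linarith) (by linarith)
  have hk : (q + q⁻¹) * q = q ^ 2 + 1 := by
    rw [add_mul, ← sq, inv_mul_cancel₀ (ne_of_gt hq)]
  have hqγ : q * γ = (32 * A + 32 * B + 32) * (q ^ 2 + 1) := by
    rw [hγdef, mul_comm q, mul_assoc, hk]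
  clear_value γ
  have habs : |a - b| = a - b := abs_of_nonneg (by linarith)
  rw [habs]
  have hMnn : (0:ℝ) ≤ |a| + |b| := by positivity
  have hX : (0:ℝ) ≤ (|a| + |b|) ^ (q - 1) := Real.rpow_nonneg hMnn _
  rcases eq_or_lt_of_le hab with heq | hba
  · subst heq
    simp [integral_same]
  have hd : 0 < a - b := by linarith
  have hdM : a - b ≤ |a| + |b| := by
    have h1 := le_abs_self a
    have h2 := neg_abs_le b
    linarith
  have hM : (0:ℝ) < |a| + |b| := lt_of_lt_of_le hd hdM
  have hsM : ∀ s ∈ Icc b a, |s| ≤ |a| + |b| := by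
    intro s hs
    have h1 := le_abs_self a
    have h2 := neg_abs_le b
    have h3 := abs_nonneg a
    have h4' := abs_nonneg b
    exact abs_le.mpr ⟨by linarith [hs.1], by linarith [hs.2]⟩
  have hlinba : (a ^ 2 - b ^ 2) / 2 - (a - b) * b = (a - b) ^ 2 / 2 := by ring
  have hdiv : ((|a| + |b|) / 4) ^ (q - 1) = (|a| + |b|) ^ (q - 1) / A := by
    rw [hAdef]; exact Real.div_rpow hMnn (by norm_num) (q - 1)
  rcases le_total 1 q with h1q | hq1
  · -- q ≥ 1
    constructor
    · -- lower bound, q ≥ 1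
      have hcase : |a| + |b| ≤ 2 * a ∨ |a| + |b| ≤ -(2 * b) := by
        rcases le_total (-b) a with h | h
        · left
          have ha0 : 0 ≤ a := by rcases le_total b 0 with hb | hb <;> linarith
          have h1 : |a| = a := abs_of_nonneg ha0
          have h2 : |b| ≤ a := abs_le.mpr ⟨by linarith, hab⟩
          linarith
        · right
          have hb0 : b ≤ 0 := by linarith
          have h1 : |b| = -b := abs_of_nonpos hb0
          have h2 : |a| ≤ -b := abs_le.mpr ⟨by linarith, h⟩
          linarith
      rcases hcase with hca | hcb
      · -- a ≥ M/2 : use right quarter [a - d/4, a]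
        have hsplit := (integral_add_adjacent_intervals (μ := volume)
          (fInt hq b b (a - (a - b) / 4)) (fInt hq b (a - (a - b) / 4) a))
        have h2 : (0:ℝ) ≤ ∫ s in b..(a - (a - b) / 4), |s| ^ (q - 1) * (s - b) :=
          intervalIntegral.integral_nonneg (by linarith) (fun s hs =>
            mul_nonneg (Real.rpow_nonneg (abs_nonneg s) _) (by linarith [hs.1]))
        have h3 : (∫ s in (a - (a - b) / 4)..a, ((|a| + |b|) / 4) ^ (q - 1) * (3 * (a - b) / 4))
            ≤ ∫ s in (a - (a - b) / 4)..a, |s| ^ (q - 1) * (s - b) := by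
          refine intervalIntegral.integral_mono_on (by linarith) intervalIntegrable_const
            (fInt hq b _ a) (fun s hs => ?_)
          have hsge : (|a| + |b|) / 4 ≤ s := by
            have := hs.1; linarith
          have h5 : ((|a| + |b|) / 4) ^ (q - 1) ≤ |s| ^ (q - 1) :=
            Real.rpow_le_rpow (by linarith) (le_trans hsge (le_abs_self s)) (by linarith)
          have h6 : 3 * (a - b) / 4 ≤ s - b := by have := hs.1; linarith
          exact mul_le_mul h5 h6 (by linarith) (Real.rpow_nonneg (abs_nonneg s) _)
        have h5 : (∫ s in (a - (a - b) / 4)..a, ((|a| + |b|) / 4) ^ (q - 1) * (3 * (a - b) / 4))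
            = ((|a| + |b|) / 4) ^ (q - 1) * (3 * (a - b) / 4) * ((a - b) / 4) := by
          rw [intervalIntegral.integral_const, smul_eq_mul]; ring
        have hI : ((|a| + |b|) ^ (q - 1) / A) * (3 * (a - b) / 4) * ((a - b) / 4)
            ≤ ∫ s in b..a, |s| ^ (q - 1) * (s - b) := by
          rw [← hdiv]
          rw [h5] at h3
          linarith [hsplit, h2, h3]
        have hg1 : 1 / γ ≤ 3 * q / (16 * A) := by
          rw [div_le_div_iff₀ hγ (by linarith)]
          nlinarith [hqγ, mul_nonneg hA.le (sq_nonneg q), mul_nonneg hB.le (sq_nonneg q),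
            sq_nonneg q, hA, hB]
        calc 1 / γ * ((|a| + |b|) ^ (q - 1) * (a - b) ^ 2)
            ≤ (3 * q / (16 * A)) * ((|a| + |b|) ^ (q - 1) * (a - b) ^ 2) :=
              mul_le_mul_of_nonneg_right hg1 (by positivity)
          _ = q * (((|a| + |b|) ^ (q - 1) / A) * (3 * (a - b) / 4) * ((a - b) / 4)) := by
              field_simp
              ring
          _ ≤ q * ∫ s in b..a, |s| ^ (q - 1) * (s - b) :=
              mul_le_mul_of_nonneg_left hI hq.le
      · -- -b ≥ M/2 : use left quarter [b, b + d/4]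
        have hsplit := (integral_add_adjacent_intervals (μ := volume)
          (fInt hq b b (b + (a - b) / 4)) (fInt hq b (b + (a - b) / 4) a))
        have h2 : (0:ℝ) ≤ ∫ s in (b + (a - b) / 4)..a, |s| ^ (q - 1) * (s - b) :=
          intervalIntegral.integral_nonneg (by linarith) (fun s hs =>
            mul_nonneg (Real.rpow_nonneg (abs_nonneg s) _) (by
              have := hs.1; linarith))
        have h3 : (∫ s in b..(b + (a - b) / 4), ((|a| + |b|) / 4) ^ (q - 1) * (s - b))
            ≤ ∫ s in b..(b + (a - b) / 4), |s| ^ (q - 1) * (s - b) := by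
          refine intervalIntegral.integral_mono_on (by linarith)
            ((continuous_const.mul (continuous_id.sub continuous_const)).intervalIntegrable _ _)
            (fInt hq b b _) (fun s hs => ?_)
          have hsle : s ≤ -((|a| + |b|) / 4) := by
            have := hs.2; linarith
          have h6 : (|a| + |b|) / 4 ≤ |s| := le_trans (by linarith [neg_le_abs s] :
            (|a| + |b|) / 4 ≤ -s) (neg_le_abs s)
          have h5 : ((|a| + |b|) / 4) ^ (q - 1) ≤ |s| ^ (q - 1) :=
            Real.rpow_le_rpow (by linarith) h6 (by linarith)
          exact mul_le_mul_of_nonneg_right h5 (by linarith [hs.1])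
        have h5 : (∫ s in b..(b + (a - b) / 4), ((|a| + |b|) / 4) ^ (q - 1) * (s - b))
            = ((|a| + |b|) / 4) ^ (q - 1) * ((a - b) ^ 2 / 32) := by
          rw [intervalIntegral.integral_const_mul, lin]; ring
        have hI : ((|a| + |b|) ^ (q - 1) / A) * ((a - b) ^ 2 / 32)
            ≤ ∫ s in b..a, |s| ^ (q - 1) * (s - b) := by
          rw [← hdiv]
          rw [h5] at h3
          linarith [hsplit, h2, h3]
        have hg1 : 1 / γ ≤ q / (32 * A) := by
          rw [div_le_div_iff₀ hγ (by linarith)]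
          nlinarith [hqγ, mul_nonneg hA.le (sq_nonneg q), mul_nonneg hB.le (sq_nonneg q),
            sq_nonneg q, hA, hB]
        calc 1 / γ * ((|a| + |b|) ^ (q - 1) * (a - b) ^ 2)
            ≤ (q / (32 * A)) * ((|a| + |b|) ^ (q - 1) * (a - b) ^ 2) :=
              mul_le_mul_of_nonneg_right hg1 (by positivity)
          _ = q * (((|a| + |b|) ^ (q - 1) / A) * ((a - b) ^ 2 / 32)) := by
              field_simp
          _ ≤ q * ∫ s in b..a, |s| ^ (q - 1) * (s - b) :=
              mul_le_mul_of_nonneg_left hI hq.le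
    · -- upper bound, q ≥ 1
      have hup : (∫ s in b..a, |s| ^ (q - 1) * (s - b))
          ≤ (|a| + |b|) ^ (q - 1) * ((a - b) ^ 2 / 2) := by
        have hmono := intervalIntegral.integral_mono_on hab (fInt hq b b a)
          ((continuous_const.mul (continuous_id.sub continuous_const)).intervalIntegrable b a)
          (fun s hs => mul_le_mul_of_nonneg_right
            (Real.rpow_le_rpow (abs_nonneg s) (hsM s hs) (by linarith))
            (by linarith [hs.1]))
        simp only [Pi.mul_apply, Pi.sub_apply, id_eq] at hmono
        rw [intervalIntegral.integral_const_mul, lin, hlinba] at hmono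
        exact hmono
      have hg1 : q / 2 ≤ γ := by
        rw [hγdef]
        nlinarith [mul_pos hA hq, mul_pos hB hq, mul_pos hA hqi, mul_pos hB hqi, hqi, hq,
          hA, hB]
      calc q * ∫ s in b..a, |s| ^ (q - 1) * (s - b)
          ≤ q * ((|a| + |b|) ^ (q - 1) * ((a - b) ^ 2 / 2)) :=
            mul_le_mul_of_nonneg_left hup hq.le
        _ = (q / 2) * ((|a| + |b|) ^ (q - 1) * (a - b) ^ 2) := by ring
        _ ≤ γ * ((|a| + |b|) ^ (q - 1) * (a - b) ^ 2) :=
            mul_le_mul_of_nonneg_right hg1 (by positivity)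
  · -- q ≤ 1
    constructor
    · -- lower bound, q ≤ 1
      have h0 : ∀ᵐ (s : ℝ) ∂(volume.restrict (Icc b a)), s ≠ 0 := by
        apply ae_restrict_of_ae
        have hset : {x : ℝ | ¬ x ≠ 0} = {0} := by ext x; simp
        rw [ae_iff, hset]
        exact measure_singleton 0
      have hae : (fun s : ℝ => (|a| + |b|) ^ (q - 1) * (s - b))
          ≤ᵐ[volume.restrict (Icc b a)] (fun s : ℝ => |s| ^ (q - 1) * (s - b)) := by
        filter_upwards [ae_restrict_mem measurableSet_Icc, h0] with s hs hs0
        exact mul_le_mul_of_nonneg_right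
          (Real.rpow_le_rpow_of_nonpos (abs_pos.mpr hs0) (hsM s hs) (by linarith))
          (by linarith [hs.1])
      have hmono := intervalIntegral.integral_mono_ae_restrict hab
        ((continuous_const.mul (continuous_id.sub continuous_const)).intervalIntegrable b a)
        (fInt hq b b a) hae
      simp only [Pi.mul_apply, Pi.sub_apply, id_eq] at hmono
      rw [intervalIntegral.integral_const_mul, lin, hlinba] at hmono
      have hg1 : 1 / γ ≤ q / 2 := by
        rw [div_le_div_iff₀ hγ (by norm_num)]
        nlinarith [hqγ, mul_nonneg hA.le (sq_nonneg q), mul_nonneg hB.le (sq_nonneg q),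
          sq_nonneg q, hA, hB]
      calc 1 / γ * ((|a| + |b|) ^ (q - 1) * (a - b) ^ 2)
          ≤ (q / 2) * ((|a| + |b|) ^ (q - 1) * (a - b) ^ 2) :=
            mul_le_mul_of_nonneg_right hg1 (by positivity)
        _ = q * ((|a| + |b|) ^ (q - 1) * ((a - b) ^ 2 / 2)) := by ring
        _ ≤ q * ∫ s in b..a, |s| ^ (q - 1) * (s - b) :=
            mul_le_mul_of_nonneg_left hmono hq.le
    · -- upper bound, q ≤ 1
      rcases le_total (|a| + |b|) (2 * (a - b)) with hMd | hMd
      · -- M ≤ 2d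
        have hI1 : (∫ s in b..a, |s| ^ (q - 1) * (s - b))
            ≤ (∫ s in b..a, |s| ^ (q - 1)) * (a - b) := by
          have hmono := intervalIntegral.integral_mono_on hab (fInt hq b b a)
            ((absInt (by linarith : (-1:ℝ) < q - 1) b a).mul_const (a - b))
            (fun s hs => mul_le_mul_of_nonneg_left (by linarith [hs.2])
              (Real.rpow_nonneg (abs_nonneg s) _))
          rwa [intervalIntegral.integral_mul_const] at hmono
        have h2q2 : (2:ℝ) ^ q ≤ 2 := by
          calc (2:ℝ) ^ q ≤ (2:ℝ) ^ (1:ℝ) :=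
            Real.rpow_le_rpow_of_exponent_le one_le_two hq1
          _ = 2 := Real.rpow_one 2
        have hdq : (0:ℝ) ≤ (a - b) ^ q := Real.rpow_nonneg hd.le _
        have h2d : ((2:ℝ) * (a - b)) ^ q = 2 ^ q * (a - b) ^ q :=
          Real.mul_rpow (by norm_num) hd.le
        have hJ : (∫ s in b..a, |s| ^ (q - 1)) ≤ 4 * (a - b) ^ q / q := by
          have habv : (-1:ℝ) < q - 1 := by linarith
          rcases le_or_gt 0 b with hb0 | hb0
          · have ha0 : 0 ≤ a := le_trans hb0 hab
            have hs1 := (integral_add_adjacent_intervals (μ := volume)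
              (absInt habv 0 b) (absInt habv b a))
            have hnn : (0:ℝ) ≤ ∫ s in (0:ℝ)..b, |s| ^ (q - 1) :=
              intervalIntegral.integral_nonneg hb0
                (fun s _ => Real.rpow_nonneg (abs_nonneg s) _)
            have hval : (∫ s in (0:ℝ)..a, |s| ^ (q - 1)) = a ^ q / q := phi hq ha0
            have haM : a ≤ 2 * (a - b) := by
              have := le_abs_self a; have := abs_nonneg b; linarith
            have hle : a ^ q ≤ 2 * (a - b) ^ q := by
              have h7 : a ^ q ≤ (2 * (a - b)) ^ q := Real.rpow_le_rpow ha0 haM hq.le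
              rw [h2d] at h7
              nlinarith [hdq, h2q2]
            rw [hval] at hs1
            have h8 : a ^ q / q ≤ 4 * (a - b) ^ q / q :=
              (div_le_div_iff_of_pos_right hq).mpr (by linarith)
            linarith
          · rcases le_or_gt a 0 with ha0 | ha0
            · have hs1 := (integral_add_adjacent_intervals (μ := volume)
                (absInt habv b a) (absInt habv a 0))
              have hnn : (0:ℝ) ≤ ∫ s in a..(0:ℝ), |s| ^ (q - 1) :=
                intervalIntegral.integral_nonneg ha0
                  (fun s _ => Real.rpow_nonneg (abs_nonneg s) _)
              have hval : (∫ s in b..(0:ℝ), |s| ^ (q - 1)) = (-b) ^ q / q :=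
                phineg hq (le_trans hab ha0)
              have hbM : -b ≤ 2 * (a - b) := by
                have := neg_le_abs b; have := abs_nonneg a; linarith
              have hle : (-b) ^ q ≤ 2 * (a - b) ^ q := by
                have h7 : (-b) ^ q ≤ (2 * (a - b)) ^ q :=
                  Real.rpow_le_rpow (by linarith) hbM hq.le
                rw [h2d] at h7
                nlinarith [hdq, h2q2]
              rw [hval] at hs1
              have h8 : (-b) ^ q / q ≤ 4 * (a - b) ^ q / q :=
                (div_le_div_iff_of_pos_right hq).mpr (by linarith)
              linarith
            · have hs1 := (integral_add_adjacent_intervals (μ := volume)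
                (absInt habv b 0) (absInt habv 0 a))
              have hval1 : (∫ s in b..(0:ℝ), |s| ^ (q - 1)) = (-b) ^ q / q :=
                phineg hq hb0.le
              have hval2 : (∫ s in (0:ℝ)..a, |s| ^ (q - 1)) = a ^ q / q := phi hq ha0.le
              have haM : a ≤ 2 * (a - b) := by linarith
              have hbM : -b ≤ 2 * (a - b) := by linarith
              have hle1 : a ^ q ≤ 2 * (a - b) ^ q := by
                have h7 : a ^ q ≤ (2 * (a - b)) ^ q :=
                  Real.rpow_le_rpow ha0.le haM hq.le
                rw [h2d] at h7
                nlinarith [hdq, h2q2]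
              have hle2 : (-b) ^ q ≤ 2 * (a - b) ^ q := by
                have h7 : (-b) ^ q ≤ (2 * (a - b)) ^ q :=
                  Real.rpow_le_rpow (by linarith) hbM hq.le
                rw [h2d] at h7
                nlinarith [hdq, h2q2]
              rw [hval1, hval2] at hs1
              have h8 : (-b) ^ q / q + a ^ q / q ≤ 4 * (a - b) ^ q / q := by
                rw [← add_div]
                exact (div_le_div_iff_of_pos_right hq).mpr (by linarith)
              linarith
        have hI2 : (∫ s in b..a, |s| ^ (q - 1) * (s - b))
            ≤ (4 * (a - b) ^ q / q) * (a - b) :=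
          le_trans hI1 (mul_le_mul_of_nonneg_right hJ hd.le)
        have hpow : (a - b) ^ q = (a - b) ^ (q - 1) * (a - b) := by
          rw [← Real.rpow_add_one (ne_of_gt hd) (q - 1), sub_add_cancel]
        have h21' : (2:ℝ) ^ (1 - q) * (2:ℝ) ^ (q - 1) = 1 := by
          rw [← Real.rpow_add two_pos]; norm_num
        have h22 : (2:ℝ) ^ (1 - q) ≤ 2 := by
          calc (2:ℝ) ^ (1 - q) ≤ (2:ℝ) ^ (1:ℝ) :=
            Real.rpow_le_rpow_of_exponent_le one_le_two (by linarith)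
          _ = 2 := Real.rpow_one 2
        have hc1 : ((2:ℝ) * (a - b)) ^ (q - 1) ≤ (|a| + |b|) ^ (q - 1) :=
          Real.rpow_le_rpow_of_nonpos hM hMd (by linarith)
        have hc2 : ((2:ℝ) * (a - b)) ^ (q - 1) = 2 ^ (q - 1) * (a - b) ^ (q - 1) :=
          Real.mul_rpow (by norm_num) hd.le
        have hc3 : (2:ℝ) ^ (q - 1) * (a - b) ^ (q - 1) ≤ (|a| + |b|) ^ (q - 1) := by
          rw [← hc2]; exact hc1
        have hkey : (a - b) ^ (q - 1) ≤ 2 * (|a| + |b|) ^ (q - 1) := by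
          have t3 := mul_le_mul_of_nonneg_left hc3
            (Real.rpow_nonneg (by norm_num : (0:ℝ) ≤ 2) (1 - q))
          rw [← mul_assoc, h21', one_mul] at t3
          have t4 := mul_le_mul_of_nonneg_right h22 hX
          linarith
        have hsum : 2 ≤ q + q⁻¹ := by nlinarith [sq_nonneg (q - 1), hqq, hq]
        have h8γ : 8 ≤ γ := by
          rw [hγdef]
          have hS : 32 ≤ 32 * A + 32 * B + 32 := by linarith
          nlinarith [hS, hsum]
        calc q * ∫ s in b..a, |s| ^ (q - 1) * (s - b)
            ≤ q * ((4 * (a - b) ^ q / q) * (a - b)) :=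
              mul_le_mul_of_nonneg_left hI2 hq.le
          _ = 4 * ((a - b) ^ q * (a - b)) := by
              field_simp
          _ = 4 * ((a - b) ^ (q - 1) * (a - b) ^ 2) := by rw [hpow]; ring
          _ ≤ 4 * (2 * (|a| + |b|) ^ (q - 1) * (a - b) ^ 2) := by
              nlinarith [mul_le_mul_of_nonneg_right hkey (sq_nonneg (a - b))]
          _ ≤ γ * ((|a| + |b|) ^ (q - 1) * (a - b) ^ 2) := by
              nlinarith [mul_le_mul_of_nonneg_right h8γ (mul_nonneg hX (sq_nonneg (a - b)))]
      · -- 2d ≤ M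
        have hpt : ∀ s ∈ Icc b a, (|a| + |b|) / 4 ≤ |s| := by
          intro s hs
          rcases le_or_gt 0 b with hb0 | hb0
          · have h1 : |a| = a := abs_of_nonneg (le_trans hb0 hab)
            have h2 : |b| = b := abs_of_nonneg hb0
            have h3 : (|a| + |b|) / 4 ≤ s := by
              rw [h1, h2] at hMd ⊢
              linarith [hs.1]
            exact le_trans h3 (le_abs_self s)
          · rcases le_or_gt a 0 with ha0 | ha0
            · have h1 : |a| = -a := abs_of_nonpos ha0
              have h2 : |b| = -b := abs_of_nonpos (by linarith)
              have h3 : (|a| + |b|) / 4 ≤ -s := by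
                rw [h1, h2] at hMd ⊢
                linarith [hs.2]
              exact le_trans h3 (neg_le_abs s)
            · exfalso
              have h1 : |a| = a := abs_of_pos ha0
              have h2 : |b| = -b := abs_of_neg hb0
              rw [h1, h2] at hMd
              linarith
        have hmono := intervalIntegral.integral_mono_on hab (fInt hq b b a)
          ((continuous_const.mul (continuous_id.sub continuous_const)).intervalIntegrable b a)
          (fun s hs => mul_le_mul_of_nonneg_right
            (Real.rpow_le_rpow_of_nonpos (by linarith : (0:ℝ) < (|a| + |b|) / 4)
              (hpt s hs) (by linarith))
            (by linarith [hs.1]))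
        simp only [Pi.mul_apply, Pi.sub_apply, id_eq] at hmono
        rw [intervalIntegral.integral_const_mul, lin, hlinba, hdiv] at hmono
        have hg1 : q / (2 * A) ≤ γ := by
          rw [div_le_iff₀ (by linarith)]
          have e : γ * (2 * A) = 64 * (A * A) * (q + q⁻¹) + 64 * (A * B) * (q + q⁻¹)
              + 64 * A * (q + q⁻¹) := by rw [hγdef]; ring
          rw [e, hAB]
          nlinarith [mul_pos (mul_pos hA hA) hq, mul_pos (mul_pos hA hA) hqi,
            mul_pos hA hq, mul_pos hA hqi, hq, hqi]
        calc q * ∫ s in b..a, |s| ^ (q - 1) * (s - b)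
            ≤ q * ((|a| + |b|) ^ (q - 1) / A * ((a - b) ^ 2 / 2)) :=
              mul_le_mul_of_nonneg_left hmono hq.le
          _ = (q / (2 * A)) * ((|a| + |b|) ^ (q - 1) * (a - b) ^ 2) := by
              field_simp
          _ ≤ γ * ((|a| + |b|) ^ (q - 1) * (a - b) ^ 2) :=
              mul_le_mul_of_nonneg_right hg1 (by positivity)

end HTSBAux

open intervalIntegral

/-- For `q > 0`, with `h a b := q ∫_b^a |s|^(q-1) (s - b) ds`, there is `γ = γ(q) > 0`
such that `(1/γ) (|a|+|b|)^(q-1) |a-b|² ≤ h a b ≤ γ (|a|+|b|)^(q-1) |a-b|²` for all reals. -/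
theorem h_two_sided_bound (q : ℝ) (hq : 0 < q) :
    ∃ γ : ℝ, 0 < γ ∧ ∀ a b : ℝ,
      (1 / γ) * ((|a| + |b|) ^ (q - 1) * |a - b| ^ 2)
          ≤ q * ∫ s in b..a, |s| ^ (q - 1) * (s - b) ∧
      q * (∫ s in b..a, |s| ^ (q - 1) * (s - b))
          ≤ γ * ((|a| + |b|) ^ (q - 1) * |a - b| ^ 2) := by
  refine ⟨(32 * (4:ℝ) ^ (q - 1) + 32 * (4:ℝ) ^ (1 - q) + 32) * (q + q⁻¹),
    mul_pos (by positivity) (add_pos hq (inv_pos.mpr hq)), fun a b => ?_⟩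
  rcases le_total b a with hab | hab
  · exact HTSBAux.key hq hab
  · have h := HTSBAux.key hq (a := -a) (b := -b) (by linarith)
    rw [HTSBAux.flip q a b]
    have e1 : |(-a)| = |a| := abs_neg a
    have e2 : |(-b)| = |b| := abs_neg b
    have e3 : |-a - -b| = |a - b| := by rw [(by ring : -a - -b = -(a - b)), abs_neg]
    rw [e1, e2, e3] at h
    exact h
end

section
/- Let q > 0 and define, for w, k ∈ ℝ, h₊(w,k) := q ∫_k^w |s|^{q−1}(s − k)₊ ds and h₋(w,k) := −q ∫_k^w |s|^{q−1}(s − k)₋ ds, where (x)₊ = max{x,0} and (x)₋ = max{−x,0}. Then there exists a constant γ = γ(q) > 0 such that for all a, b ∈ ℝ: (1/γ)·(|a| + |b|)^{q−1} (a − b)₊² ≤ h₊(a,b) ≤ γ·(|a| + |b|)^{q−1} (a − b)₊², and (1/γ)·(|a| + |b|)^{q−1} (a − b)₋² ≤ h₋(a,b) ≤ γ·(|a| + |b|)^{q−1} (a − b)₋². -/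
open intervalIntegral


open intervalIntegral

namespace HPMaux

open MeasureTheory Set

variable {q : ℝ}

noncomputable def F (q t : ℝ) : ℝ := if t < 0 then -((-t) ^ q) else t ^ q

lemma F_of_nonneg {t : ℝ} (ht : 0 ≤ t) : F q t = t ^ q := if_neg (not_lt.2 ht)

lemma F_of_nonpos (hq : 0 < q) {t : ℝ} (ht : t ≤ 0) : F q t = -((-t) ^ q) := by
  rcases lt_or_eq_of_le ht with h | h
  · exact if_pos h
  · subst h; simp [F, Real.zero_rpow hq.ne']

lemma II_abs_rpow (hq : 0 < q) (x y : ℝ) :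
    IntervalIntegrable (fun s : ℝ => |s| ^ (q - 1)) volume x y := by
  suffices h : ∀ c : ℝ, IntervalIntegrable (fun s : ℝ => |s| ^ (q - 1)) volume 0 c from
    (h x).symm.trans (h y)
  have hpos : ∀ c : ℝ, 0 ≤ c → IntervalIntegrable (fun s : ℝ => |s| ^ (q - 1)) volume 0 c := by
    intro c hc
    rw [intervalIntegrable_iff, uIoc_of_le hc]
    have h2 : IntegrableOn (fun s : ℝ => s ^ (q - 1)) (Ioc 0 c) volume := by
      have := intervalIntegrable_rpow' (a := 0) (b := c) (show (-1:ℝ) < q - 1 by linarith)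
      rwa [intervalIntegrable_iff, uIoc_of_le hc] at this
    exact h2.congr_fun (fun s hs => by rw [abs_of_pos hs.1]) measurableSet_Ioc
  intro c
  rcases le_total 0 c with hc | hc
  · exact hpos c hc
  · have h1 := (IntervalIntegrable.iff_comp_neg).mp (hpos (-c) (by linarith))
    simp only [abs_neg, neg_zero, neg_neg] at h1
    exact h1

lemma II_mul (hq : 0 < q) {g : ℝ → ℝ} (hg : Continuous g) (x y : ℝ) :
    IntervalIntegrable (fun s : ℝ => |s| ^ (q - 1) * g s) volume x y :=
  (II_abs_rpow hq x y).mul_continuousOn hg.continuousOn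

lemma integral_abs_rpow (hq : 0 < q) {x y : ℝ} (hxy : x ≤ y) :
    q * ∫ s in x..y, |s| ^ (q - 1) = F q y - F q x := by
  have key : ∀ u v : ℝ, 0 ≤ u → u ≤ v →
      q * ∫ s in u..v, |s| ^ (q - 1) = v ^ q - u ^ q := by
    intro u v hu huv
    have h1 : ∫ s in u..v, |s| ^ (q - 1) = ∫ s in u..v, s ^ (q - 1) := by
      apply integral_congr
      intro s hs
      rw [uIcc_of_le huv] at hs
      simp [abs_of_nonneg (hu.trans hs.1)]
    rw [h1, integral_rpow (Or.inl (by linarith)), show q - 1 + 1 = q by ring]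
    field_simp
  have keyneg : ∀ u v : ℝ, v ≤ 0 → u ≤ v →
      q * ∫ s in u..v, |s| ^ (q - 1) = (-u) ^ q - (-v) ^ q := by
    intro u v hv huv
    have h2 : ∫ s in u..v, |s| ^ (q - 1) = ∫ s in -v..-u, |s| ^ (q - 1) := by
      have h3 := integral_comp_neg (a := u) (b := v) (fun s : ℝ => |s| ^ (q - 1))
      simp only [abs_neg] at h3
      exact h3
    rw [h2, key (-v) (-u) (by linarith) (by linarith)]
  rcases le_or_gt 0 x with hx | hx
  · rw [key x y hx hxy, F_of_nonneg hx, F_of_nonneg (hx.trans hxy)]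
  · rcases le_or_gt y 0 with hy | hy
    · rw [keyneg x y hy hxy, F_of_nonpos hq hy, F_of_nonpos hq (hxy.trans hy)]
      ring
    · have hsplit : (∫ s in x..(0:ℝ), |s| ^ (q-1)) + ∫ s in (0:ℝ)..y, |s| ^ (q-1)
          = ∫ s in x..y, |s| ^ (q-1) :=
        integral_add_adjacent_intervals (II_abs_rpow hq x 0) (II_abs_rpow hq 0 y)
      rw [← hsplit, mul_add, keyneg x 0 le_rfl hx.le, key 0 y le_rfl hy.le,
        F_of_nonpos hq hx.le, F_of_nonneg hy.le]
      norm_num [Real.zero_rpow hq.ne']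
      ring

lemma mvt_rpow (hq : 0 < q) {u v : ℝ} (hu : 0 ≤ u) (huv : u < v) (h : 0 < u ∨ 1 ≤ q) :
    ∃ ξ, u < ξ ∧ ξ < v ∧ v ^ q - u ^ q = q * ξ ^ (q - 1) * (v - u) := by
  have hcont : ContinuousOn (fun s : ℝ => s ^ q) (Icc u v) :=
    continuousOn_id.rpow_const fun s _ => Or.inr hq.le
  have hderiv : ∀ s ∈ Ioo u v, HasDerivAt (fun s : ℝ => s ^ q) (q * s ^ (q - 1)) s := by
    intro s hs
    exact Real.hasDerivAt_rpow_const (h.imp (fun h0 => ((h0.trans hs.1).ne')) id)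
  obtain ⟨ξ, hξ, hs⟩ := exists_hasDerivAt_eq_slope _ _ huv hcont hderiv
  refine ⟨ξ, hξ.1, hξ.2, ?_⟩
  rw [hs, div_mul_cancel₀ _ (sub_ne_zero.2 huv.ne')]



set_option maxHeartbeats 1000000 in
lemma Pbound (hq : 0 < q) :
    ∃ c C : ℝ, 0 < c ∧ 0 < C ∧ ∀ u v : ℝ, 0 ≤ u → u ≤ v →
      c * ((u + v) ^ (q - 1) * (v - u)) ≤ v ^ q - u ^ q ∧
      v ^ q - u ^ q ≤ C * ((u + v) ^ (q - 1) * (v - u)) := by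
  have e2 : (2:ℝ) ^ (q - 1) * 2 ^ (1 - q) = 1 := by
    rw [← Real.rpow_add two_pos]; norm_num
  have e4 : (4:ℝ) ^ (q - 1) * 4 ^ (1 - q) = 1 := by
    rw [← Real.rpow_add (by norm_num : (0:ℝ) < 4)]; norm_num
  set B2 : ℝ := 2 ^ (q - 1) + 2 ^ (1 - q) with hB2
  set B4 : ℝ := 4 ^ (q - 1) + 4 ^ (1 - q) with hB4
  have p2a : (0:ℝ) < 2 ^ (q - 1) := Real.rpow_pos_of_pos two_pos _
  have p2b : (0:ℝ) < 2 ^ (1 - q) := Real.rpow_pos_of_pos two_pos _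
  have p4a : (0:ℝ) < 4 ^ (q - 1) := Real.rpow_pos_of_pos (by norm_num) _
  have p4b : (0:ℝ) < 4 ^ (1 - q) := Real.rpow_pos_of_pos (by norm_num) _
  have hB2pos : 0 < B2 := by positivity
  have hB4pos : 0 < B4 := by positivity
  have hB2one : 1 ≤ B2 := by nlinarith [sq_nonneg ((2:ℝ) ^ (q-1) - 1)]
  have hB4one : 1 ≤ B4 := by nlinarith [sq_nonneg ((4:ℝ) ^ (q-1) - 1)]
  have h2q : (2:ℝ) ^ (-q) < 1 := Real.rpow_lt_one_of_one_lt_of_neg one_lt_two (by linarith)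
  have h2qpos : (0:ℝ) < 2 ^ (-q) := Real.rpow_pos_of_pos two_pos _
  set c1 : ℝ := (1 - 2 ^ (-q)) / B2 with hc1
  have hc1pos : 0 < c1 := div_pos (by linarith) hB2pos
  clear_value B2 B4 c1
  refine ⟨min c1 (q / B4), (q + 1) * B2, lt_min hc1pos (div_pos hq hB4pos), by positivity, ?_⟩
  intro u v hu huv
  rcases eq_or_lt_of_le huv with rfl | hlt
  · simp
  have hvpos : 0 < v := lt_of_le_of_lt hu hlt
  have huvpos : 0 < u + v := by linarith
  have htnn : 0 ≤ (u + v) ^ (q - 1) * (v - u) :=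
    mul_nonneg (Real.rpow_nonneg huvpos.le _) (by linarith)
  have hvq : (0:ℝ) < v ^ q := Real.rpow_pos_of_pos hvpos q
  have r3 : v ^ (q - 1) * v = v ^ q := by
    rw [Real.rpow_sub_one hvpos.ne']; field_simp
  constructor
  · -- lower bound
    rcases le_or_gt u (v / 2) with hcase | hcase
    · -- u small
      have huq : u ^ q ≤ 2 ^ (-q) * v ^ q := by
        have h1 : u ^ q ≤ (v / 2) ^ q := Real.rpow_le_rpow hu hcase hq.le
        have h2 : (v / 2 : ℝ) ^ q = 2 ^ (-q) * v ^ q := by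
          rw [div_eq_mul_inv, Real.mul_rpow hvpos.le (by norm_num),
            Real.inv_rpow (by norm_num : (0:ℝ) ≤ 2), ← Real.rpow_neg (by norm_num : (0:ℝ) ≤ 2)]
          ring
        rwa [h2] at h1
      have hbound : (u + v) ^ (q - 1) * (v - u) ≤ B2 * v ^ q := by
        rcases le_total q 1 with h1 | h1
        · have r1 : (u + v) ^ (q - 1) ≤ v ^ (q - 1) :=
            Real.rpow_le_rpow_of_nonpos hvpos (by linarith) (by linarith)
          have r2 : (u + v) ^ (q - 1) * (v - u) ≤ v ^ (q - 1) * v :=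
            mul_le_mul r1 (by linarith) (by linarith) (Real.rpow_nonneg hvpos.le _)
          rw [r3] at r2
          have : 0 ≤ (B2 - 1) * v ^ q := mul_nonneg (by linarith) hvq.le
          linarith
        · have r1 : (u + v) ^ (q - 1) ≤ (2 * v) ^ (q - 1) :=
            Real.rpow_le_rpow huvpos.le (by linarith) (by linarith)
          have r2 : ((2:ℝ) * v) ^ (q - 1) = 2 ^ (q - 1) * v ^ (q - 1) :=
            Real.mul_rpow (by norm_num) hvpos.le
          rw [r2] at r1
          have r4 : (u + v) ^ (q - 1) * (v - u) ≤ 2 ^ (q - 1) * v ^ (q - 1) * v := by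
            apply mul_le_mul r1 (by linarith) (by linarith) (by positivity)
          have r5 : (2:ℝ) ^ (q - 1) * v ^ (q - 1) * v = 2 ^ (q - 1) * v ^ q := by
            rw [mul_assoc, r3]
          have : 0 ≤ (B2 - 2 ^ (q - 1)) * v ^ q := mul_nonneg (by linarith) hvq.le
          nlinarith
      have hmin : min c1 (q / B4) * ((u + v) ^ (q - 1) * (v - u)) ≤ c1 * (B2 * v ^ q) :=
        mul_le_mul (min_le_left _ _) hbound htnn hc1pos.le
      have hfin : c1 * (B2 * v ^ q) = v ^ q - 2 ^ (-q) * v ^ q := by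
        rw [hc1]; field_simp
      linarith
    · -- u ≥ v/2
      have hupos : 0 < u := by linarith
      obtain ⟨ξ, hξ1, hξ2, heq⟩ := mvt_rpow hq hu hlt (Or.inl hupos)
      have hξpos : 0 < ξ := hupos.trans hξ1
      have hξnn : (0:ℝ) ≤ ξ ^ (q - 1) := Real.rpow_nonneg hξpos.le _
      have hκ : (u + v) ^ (q - 1) ≤ B4 * ξ ^ (q - 1) := by
        rcases le_total q 1 with h1 | h1
        · have r1 : (u + v) ^ (q - 1) ≤ ξ ^ (q - 1) :=
            Real.rpow_le_rpow_of_nonpos hξpos (by linarith) (by linarith)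
          exact r1.trans (le_mul_of_one_le_left hξnn hB4one)
        · have r1 : (u + v) ^ (q - 1) ≤ (4 * ξ) ^ (q - 1) :=
            Real.rpow_le_rpow huvpos.le (by linarith) (by linarith)
          have r2 : ((4:ℝ) * ξ) ^ (q - 1) = 4 ^ (q - 1) * ξ ^ (q - 1) :=
            Real.mul_rpow (by norm_num) hξpos.le
          rw [r2] at r1
          exact r1.trans (mul_le_mul_of_nonneg_right (by linarith) hξnn)
      have step : (q / B4) * ((u + v) ^ (q - 1) * (v - u)) ≤ q * ξ ^ (q - 1) * (v - u) := by
        have h5 : (u + v) ^ (q - 1) * (v - u) ≤ (B4 * ξ ^ (q - 1)) * (v - u) :=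
          mul_le_mul_of_nonneg_right hκ (by linarith)
        calc (q / B4) * ((u + v) ^ (q - 1) * (v - u))
            ≤ (q / B4) * ((B4 * ξ ^ (q - 1)) * (v - u)) :=
              mul_le_mul_of_nonneg_left h5 (by positivity)
          _ = q * ξ ^ (q - 1) * (v - u) := by
              field_simp
      calc min c1 (q / B4) * ((u + v) ^ (q - 1) * (v - u))
          ≤ (q / B4) * ((u + v) ^ (q - 1) * (v - u)) :=
            mul_le_mul_of_nonneg_right (min_le_right _ _) htnn
        _ ≤ q * ξ ^ (q - 1) * (v - u) := step
        _ = v ^ q - u ^ q := heq.symm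
  · -- upper bound
    rcases le_total q 1 with h1 | h1
    · have r0 : v ^ q - u ^ q ≤ v ^ (q - 1) * (v - u) := by
        have key : v ^ (q - 1) * u ≤ u ^ q := by
          rcases eq_or_lt_of_le hu with rfl | hupos
          · simp [Real.zero_rpow hq.ne']
          · have r1 : v ^ (q - 1) ≤ u ^ (q - 1) :=
              Real.rpow_le_rpow_of_nonpos hupos huv (by linarith)
            have r2 : u ^ (q - 1) * u = u ^ q := by
              rw [Real.rpow_sub_one hupos.ne']; field_simp
            nlinarith
        nlinarith [r3]
      have r5 : v ^ (q - 1) ≤ 2 ^ (1 - q) * (u + v) ^ (q - 1) := by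
        have r6 : ((2:ℝ) * v) ^ (q - 1) ≤ (u + v) ^ (q - 1) :=
          Real.rpow_le_rpow_of_nonpos huvpos (by linarith) (by linarith)
        have r7 : ((2:ℝ) * v) ^ (q - 1) = 2 ^ (q - 1) * v ^ (q - 1) :=
          Real.mul_rpow (by norm_num) hvpos.le
        rw [r7] at r6
        nlinarith [Real.rpow_nonneg hvpos.le (q - 1)]
      have hmain : v ^ q - u ^ q ≤ 2 ^ (1 - q) * ((u + v) ^ (q - 1) * (v - u)) := by
        calc v ^ q - u ^ q ≤ v ^ (q - 1) * (v - u) := r0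
          _ ≤ (2 ^ (1 - q) * (u + v) ^ (q - 1)) * (v - u) :=
              mul_le_mul_of_nonneg_right r5 (by linarith)
          _ = 2 ^ (1 - q) * ((u + v) ^ (q - 1) * (v - u)) := by ring
      have hcc : (2:ℝ) ^ (1 - q) ≤ (q + 1) * B2 := by nlinarith
      calc v ^ q - u ^ q ≤ 2 ^ (1 - q) * ((u + v) ^ (q - 1) * (v - u)) := hmain
        _ ≤ (q + 1) * B2 * ((u + v) ^ (q - 1) * (v - u)) :=
            mul_le_mul_of_nonneg_right hcc htnn
    · obtain ⟨ξ, hξ1, hξ2, heq⟩ := mvt_rpow hq hu hlt (Or.inr h1)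
      have hξpos : 0 < ξ := lt_of_le_of_lt hu hξ1
      have r1 : ξ ^ (q - 1) ≤ (u + v) ^ (q - 1) :=
        Real.rpow_le_rpow hξpos.le (by linarith) (by linarith)
      have hmain : v ^ q - u ^ q ≤ q * ((u + v) ^ (q - 1) * (v - u)) := by
        rw [heq, mul_assoc]
        apply mul_le_mul_of_nonneg_left _ hq.le
        exact mul_le_mul_of_nonneg_right r1 (by linarith)
      have hcc : q ≤ (q + 1) * B2 := by nlinarith
      calc v ^ q - u ^ q ≤ q * ((u + v) ^ (q - 1) * (v - u)) := hmain
        _ ≤ (q + 1) * B2 * ((u + v) ^ (q - 1) * (v - u)) :=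
            mul_le_mul_of_nonneg_right hcc htnn

lemma scalar (hq : 0 < q) :
    ∃ c C : ℝ, 0 < c ∧ 0 < C ∧ ∀ x y : ℝ, x ≤ y →
      c * ((|x| + |y|) ^ (q - 1) * (y - x)) ≤ F q y - F q x ∧
      F q y - F q x ≤ C * ((|x| + |y|) ^ (q - 1) * (y - x)) := by
  obtain ⟨c, C, hc, hC, hP⟩ := Pbound hq
  have h2qpos : (0:ℝ) < 2 ^ (-q) := Real.rpow_pos_of_pos two_pos _
  have e2q : (2:ℝ) ^ (-q) * 2 ^ q = 1 := by
    rw [← Real.rpow_add two_pos]; norm_num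
  refine ⟨min c (2 ^ (-q)), max C 2, lt_min hc h2qpos,
    lt_of_lt_of_le hC (le_max_left _ _), ?_⟩
  intro x y hxy
  rcases le_or_gt 0 x with hx | hx
  · have hy : 0 ≤ y := hx.trans hxy
    obtain ⟨h1, h2⟩ := hP x y hx hxy
    rw [F_of_nonneg hx, F_of_nonneg hy, abs_of_nonneg hx, abs_of_nonneg hy]
    have t0 : 0 ≤ (x + y) ^ (q - 1) * (y - x) :=
      mul_nonneg (Real.rpow_nonneg (by linarith) _) (by linarith)
    exact ⟨le_trans (mul_le_mul_of_nonneg_right (min_le_left _ _) t0) h1,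
      le_trans h2 (mul_le_mul_of_nonneg_right (le_max_left _ _) t0)⟩
  · rcases le_or_gt y 0 with hy | hy
    · obtain ⟨h1, h2⟩ := hP (-y) (-x) (by linarith) (by linarith)
      rw [F_of_nonpos hq hy, F_of_nonpos hq (by linarith : x ≤ 0),
        abs_of_neg hx, abs_of_nonpos hy]
      have e1 : -x + -y = -y + -x := by ring
      have e2 : (-x : ℝ) - -y = y - x := by ring
      rw [e1]
      rw [e2] at h1 h2
      have t0 : 0 ≤ (-y + -x) ^ (q - 1) * (y - x) :=
        mul_nonneg (Real.rpow_nonneg (by linarith) _) (by linarith)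
      constructor
      · calc min c (2 ^ (-q)) * ((-y + -x) ^ (q - 1) * (y - x))
            ≤ c * ((-y + -x) ^ (q - 1) * (y - x)) :=
              mul_le_mul_of_nonneg_right (min_le_left _ _) t0
          _ ≤ (-x) ^ q - (-y) ^ q := h1
          _ = -(-y) ^ q - -(-x) ^ q := by ring
      · calc -(-y) ^ q - -(-x) ^ q = (-x) ^ q - (-y) ^ q := by ring
          _ ≤ C * ((-y + -x) ^ (q - 1) * (y - x)) := h2
          _ ≤ max C 2 * ((-y + -x) ^ (q - 1) * (y - x)) :=
              mul_le_mul_of_nonneg_right (le_max_left _ _) t0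
    · -- x < 0 < y
      set u : ℝ := -x with hu
      have hupos : 0 < u := by rw [hu]; linarith
      rw [F_of_nonneg hy.le, F_of_nonpos hq hx.le, abs_of_neg hx, abs_of_pos hy]
      have hz : (0:ℝ) < -x + y := by linarith
      have hzy : y - x = -x + y := by ring
      have hzz : (-x + y) ^ (q - 1) * (-x + y) = (-x + y) ^ q := by
        rw [Real.rpow_sub_one hz.ne']; field_simp
      have hxq : (0:ℝ) ≤ (-x) ^ q := Real.rpow_nonneg (by linarith) _
      have hyq : (0:ℝ) ≤ y ^ q := Real.rpow_nonneg hy.le _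
      have hzq : (0:ℝ) ≤ (-x + y) ^ q := Real.rpow_nonneg hz.le _
      constructor
      · -- lower: 2^{-q} (z)^q ≤ y^q + (-x)^q
        have key : 2 ^ (-q) * (-x + y) ^ q ≤ y ^ q + (-x) ^ q := by
          rcases le_total (-x) y with hcmp | hcmp
          · have h3 : (-x + y : ℝ) ^ q ≤ (2 * y) ^ q :=
              Real.rpow_le_rpow hz.le (by linarith) hq.le
            have h4 : ((2:ℝ) * y) ^ q = 2 ^ q * y ^ q := Real.mul_rpow (by norm_num) hy.le
            rw [h4] at h3
            nlinarith
          · have h3 : (-x + y : ℝ) ^ q ≤ (2 * (-x)) ^ q :=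
              Real.rpow_le_rpow hz.le (by linarith) hq.le
            have h4 : ((2:ℝ) * (-x)) ^ q = 2 ^ q * (-x) ^ q :=
              Real.mul_rpow (by norm_num) (by linarith)
            rw [h4] at h3
            nlinarith
        have t0 : 0 ≤ (-x + y) ^ (q - 1) * (y - x) :=
          mul_nonneg (Real.rpow_nonneg hz.le _) (by linarith)
        calc min c (2 ^ (-q)) * ((-x + y) ^ (q - 1) * (y - x))
            ≤ 2 ^ (-q) * ((-x + y) ^ (q - 1) * (y - x)) :=
              mul_le_mul_of_nonneg_right (min_le_right _ _) t0
          _ = 2 ^ (-q) * (-x + y) ^ q := by rw [hzy, hzz]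
          _ ≤ y ^ q + (-x) ^ q := key
          _ = y ^ q - -(-x) ^ q := by ring
      · -- upper: y^q + (-x)^q ≤ 2 z^q
        have key : y ^ q + (-x) ^ q ≤ 2 * (-x + y) ^ q := by
          have h3 : y ^ q ≤ (-x + y) ^ q := Real.rpow_le_rpow hy.le (by linarith) hq.le
          have h4 : (-x) ^ q ≤ (-x + y) ^ q :=
            Real.rpow_le_rpow (by linarith) (by linarith) hq.le
          linarith
        have t0 : 0 ≤ (-x + y) ^ (q - 1) * (y - x) :=
          mul_nonneg (Real.rpow_nonneg hz.le _) (by linarith)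
        calc y ^ q - -(-x) ^ q = y ^ q + (-x) ^ q := by ring
          _ ≤ 2 * (-x + y) ^ q := key
          _ = 2 * ((-x + y) ^ (q - 1) * (y - x)) := by rw [hzy, hzz]
          _ ≤ max C 2 * ((-x + y) ^ (q - 1) * (y - x)) :=
              mul_le_mul_of_nonneg_right (le_max_right _ _) t0

set_option maxHeartbeats 1000000 in
lemma core (hq : 0 < q) :
    ∃ c C : ℝ, 0 < c ∧ 0 < C ∧ ∀ a b : ℝ, b < a →
      c * ((|a| + |b|) ^ (q - 1) * (a - b) ^ 2) ≤ q * ∫ s in b..a, |s| ^ (q - 1) * (s - b) ∧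
      q * ∫ s in b..a, |s| ^ (q - 1) * (s - b) ≤ C * ((|a| + |b|) ^ (q - 1) * (a - b) ^ 2) := by
  obtain ⟨c, C, hc, hC, hS⟩ := scalar hq
  set κ : ℝ := min ((2:ℝ) ^ (q - 1)) ((2:ℝ) ^ (1 - q)) with hκdef
  have hκpos : 0 < κ :=
    lt_min (Real.rpow_pos_of_pos two_pos _) (Real.rpow_pos_of_pos two_pos _)
  refine ⟨c * κ / 4, C, by positivity, hC, ?_⟩
  intro a b hba
  set d : ℝ := a - b with hd
  have hdpos : 0 < d := by rw [hd]; linarith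
  set M : ℝ := |a| + |b| with hM
  have hdM : d ≤ M := by
    rw [hd, hM]; linarith [le_abs_self a, neg_abs_le b]
  have hMpos : 0 < M := lt_of_lt_of_le hdpos hdM
  set m : ℝ := (a + b) / 2 with hm
  have hbm : b < m := by rw [hm]; linarith
  have ham : m < a := by rw [hm]; linarith
  have mb : m - b = d / 2 := by rw [hm, hd]; ring
  have am : a - m = d / 2 := by rw [hm, hd]; ring
  have I1 : ∀ x y : ℝ, IntervalIntegrable (fun s : ℝ => |s| ^ (q - 1) * (s - b)) volume x y :=
    fun x y => II_mul hq (continuous_id.sub continuous_const) x y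
  have I2 : ∀ (x y r : ℝ), IntervalIntegrable (fun s : ℝ => |s| ^ (q - 1) * r) volume x y :=
    fun x y r => II_mul hq continuous_const x y
  constructor
  · -- LOWER BOUND
    have low1 : ∫ s in m..a, |s| ^ (q - 1) * (s - b) ≤ ∫ s in b..a, |s| ^ (q - 1) * (s - b) := by
      rw [← integral_add_adjacent_intervals (I1 b m) (I1 m a)]
      have h0 : 0 ≤ ∫ s in b..m, |s| ^ (q - 1) * (s - b) :=
        integral_nonneg hbm.le fun s hs =>
          mul_nonneg (Real.rpow_nonneg (abs_nonneg s) _) (by linarith [hs.1])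
      linarith
    have low2 : ∫ s in m..a, |s| ^ (q - 1) * (d / 2) ≤ ∫ s in m..a, |s| ^ (q - 1) * (s - b) := by
      apply integral_mono_on ham.le (I2 m a (d / 2)) (I1 m a)
      intro s hs
      exact mul_le_mul_of_nonneg_left (by linarith [hs.1])
        (Real.rpow_nonneg (abs_nonneg s) _)
    have low3 : q * ((∫ s in m..a, |s| ^ (q - 1)) * (d / 2)) = (F q a - F q m) * (d / 2) := by
      rw [← integral_abs_rpow hq ham.le]; ring
    -- comparison of (|m| + |a|) with M
    have hm1 : |m| ≤ M / 2 := by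
      rw [hm, hM]
      calc |(a + b) / 2| = |a + b| / 2 := by rw [abs_div]; norm_num
        _ ≤ (|a| + |b|) / 2 := by linarith [abs_add_le a b]
    have hb1 : |b| ≤ |m| + d / 2 := by
      have h5 : b = m + -(d / 2) := by rw [hm, hd]; ring
      calc |b| = |m + -(d / 2)| := by rw [← h5]
        _ ≤ |m| + |(-(d / 2))| := abs_add_le _ _
        _ = |m| + d / 2 := by rw [abs_neg, abs_of_pos (by linarith : (0:ℝ) < d / 2)]
    have hMhalf : M / 2 ≤ |m| + |a| := by
      rw [hM] at hdM ⊢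
      linarith
    have hM2 : |m| + |a| ≤ 2 * M := by
      have : |a| ≤ M := by rw [hM]; linarith [abs_nonneg b]
      linarith
    have hκM : κ * M ^ (q - 1) ≤ (|m| + |a|) ^ (q - 1) := by
      have hma : (0:ℝ) < |m| + |a| := by linarith
      rcases le_total q 1 with h1q | h1q
      · have r1 : (2 * M) ^ (q - 1) ≤ (|m| + |a|) ^ (q - 1) :=
          Real.rpow_le_rpow_of_nonpos hma (by linarith) (by linarith)
        have r2 : ((2:ℝ) * M) ^ (q - 1) = 2 ^ (q - 1) * M ^ (q - 1) :=
          Real.mul_rpow (by norm_num) hMpos.le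
        rw [r2] at r1
        have hmin : κ ≤ 2 ^ (q - 1) := min_le_left _ _
        have := mul_le_mul_of_nonneg_right hmin (Real.rpow_nonneg hMpos.le (q - 1))
        linarith
      · have r1 : (M / 2) ^ (q - 1) ≤ (|m| + |a|) ^ (q - 1) :=
          Real.rpow_le_rpow (by positivity) (by linarith) (by linarith)
        have r2 : ((M / 2 : ℝ)) ^ (q - 1) = M ^ (q - 1) * 2 ^ (1 - q) := by
          rw [show (1:ℝ) - q = -(q - 1) by ring, Real.rpow_neg (by norm_num : (0:ℝ) ≤ 2),
            div_eq_mul_inv, Real.mul_rpow hMpos.le (by norm_num),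
            Real.inv_rpow (by norm_num : (0:ℝ) ≤ 2)]
        rw [r2] at r1
        have hmin : κ ≤ 2 ^ (1 - q) := min_le_right _ _
        have := mul_le_mul_of_nonneg_right hmin (Real.rpow_nonneg hMpos.le (q - 1))
        nlinarith [Real.rpow_nonneg hMpos.le (q - 1)]
    have t1 : c * ((|m| + |a|) ^ (q - 1) * (d / 2)) ≤ F q a - F q m := by
      have h6 := (hS m a ham.le).1
      rwa [am] at h6
    have t2 : c * κ * (M ^ (q - 1) * (d / 2)) ≤ c * ((|m| + |a|) ^ (q - 1) * (d / 2)) := by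
      have h7 : κ * M ^ (q - 1) * (d / 2) ≤ (|m| + |a|) ^ (q - 1) * (d / 2) :=
        mul_le_mul_of_nonneg_right hκM (by linarith)
      calc c * κ * (M ^ (q - 1) * (d / 2)) = c * (κ * M ^ (q - 1) * (d / 2)) := by ring
        _ ≤ c * ((|m| + |a|) ^ (q - 1) * (d / 2)) := mul_le_mul_of_nonneg_left h7 hc.le
    have t3 : (c * κ * (M ^ (q - 1) * (d / 2))) * (d / 2) ≤ (F q a - F q m) * (d / 2) :=
      mul_le_mul_of_nonneg_right (t2.trans t1) (by linarith)
    have t4 : (F q a - F q m) * (d / 2) ≤ q * ∫ s in m..a, |s| ^ (q - 1) * (s - b) := by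
      calc (F q a - F q m) * (d / 2)
          = q * ((∫ s in m..a, |s| ^ (q - 1)) * (d / 2)) := low3.symm
        _ = q * ∫ s in m..a, |s| ^ (q - 1) * (d / 2) := by rw [intervalIntegral.integral_mul_const]
        _ ≤ q * ∫ s in m..a, |s| ^ (q - 1) * (s - b) := mul_le_mul_of_nonneg_left low2 hq.le
    have t5 : q * ∫ s in m..a, |s| ^ (q - 1) * (s - b)
        ≤ q * ∫ s in b..a, |s| ^ (q - 1) * (s - b) := mul_le_mul_of_nonneg_left low1 hq.le
    calc c * κ / 4 * (M ^ (q - 1) * d ^ 2)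
        = (c * κ * (M ^ (q - 1) * (d / 2))) * (d / 2) := by ring
      _ ≤ (F q a - F q m) * (d / 2) := t3
      _ ≤ q * ∫ s in m..a, |s| ^ (q - 1) * (s - b) := t4
      _ ≤ q * ∫ s in b..a, |s| ^ (q - 1) * (s - b) := t5
  · -- UPPER BOUND
    have up1 : ∫ s in b..a, |s| ^ (q - 1) * (s - b) ≤ ∫ s in b..a, |s| ^ (q - 1) * d := by
      apply integral_mono_on hba.le (I1 b a) (I2 b a d)
      intro s hs
      exact mul_le_mul_of_nonneg_left (by rw [hd]; linarith [hs.2])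
        (Real.rpow_nonneg (abs_nonneg s) _)
    have up3 : q * ((∫ s in b..a, |s| ^ (q - 1)) * d) = (F q a - F q b) * d := by
      rw [← integral_abs_rpow hq hba.le]; ring
    have h2 := (hS b a hba.le).2
    rw [← hd] at h2
    have e8 : |b| + |a| = M := by rw [hM]; ring
    rw [e8] at h2
    calc q * ∫ s in b..a, |s| ^ (q - 1) * (s - b)
        ≤ q * ∫ s in b..a, |s| ^ (q - 1) * d := mul_le_mul_of_nonneg_left up1 hq.le
      _ = q * ((∫ s in b..a, |s| ^ (q - 1)) * d) := by rw [intervalIntegral.integral_mul_const]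
      _ = (F q a - F q b) * d := up3
      _ ≤ (C * (M ^ (q - 1) * d)) * d := mul_le_mul_of_nonneg_right h2 hdpos.le
      _ = C * (M ^ (q - 1) * d ^ 2) := by ring

lemma main_pair (hq : 0 < q) :
    ∃ γ : ℝ, 0 < γ ∧ ∀ a b : ℝ,
      (1 / γ) * ((|a| + |b|) ^ (q - 1) * (max (a - b) 0) ^ 2)
          ≤ q * ∫ s in b..a, |s| ^ (q - 1) * max (s - b) 0 ∧
      q * (∫ s in b..a, |s| ^ (q - 1) * max (s - b) 0)
          ≤ γ * ((|a| + |b|) ^ (q - 1) * (max (a - b) 0) ^ 2) := by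
  obtain ⟨c, C, hc, hC, hcore⟩ := core hq
  have hγpos : 0 < max C (1 / c) := lt_of_lt_of_le hC (le_max_left _ _)
  refine ⟨max C (1 / c), hγpos, ?_⟩
  intro a b
  rcases le_or_gt a b with hab | hba
  · have hzero : ∫ s in b..a, |s| ^ (q - 1) * max (s - b) 0 = 0 := by
      have heq : EqOn (fun s : ℝ => |s| ^ (q - 1) * max (s - b) 0) 0 (Set.uIcc b a) := by
        intro s hs
        rw [Set.uIcc_of_ge hab] at hs
        have h9 : s ≤ b := hs.2
        simp [max_eq_right (by linarith : s - b ≤ 0)]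
      rw [integral_congr heq]
      simp
    rw [hzero, max_eq_right (by linarith : a - b ≤ 0)]
    norm_num
  · have hmax : max (a - b) 0 = a - b := max_eq_left (by linarith)
    have hcongr : ∫ s in b..a, |s| ^ (q - 1) * max (s - b) 0
        = ∫ s in b..a, |s| ^ (q - 1) * (s - b) := by
      apply integral_congr
      intro s hs
      rw [Set.uIcc_of_le hba.le] at hs
      simp only
      rw [max_eq_left (by linarith [hs.1] : (0:ℝ) ≤ s - b)]
    obtain ⟨hl, hu⟩ := hcore a b hba
    rw [hcongr, hmax]
    have tnn : 0 ≤ (|a| + |b|) ^ (q - 1) * (a - b) ^ 2 :=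
      mul_nonneg (Real.rpow_nonneg (by positivity) _) (sq_nonneg _)
    constructor
    · have h1γ : 1 / max C (1 / c) ≤ c := by
        rw [div_le_iff₀ hγpos]
        calc (1:ℝ) = c * (1 / c) := by field_simp
          _ ≤ c * max C (1 / c) := mul_le_mul_of_nonneg_left (le_max_right _ _) hc.le
      exact le_trans (mul_le_mul_of_nonneg_right h1γ tnn) hl
    · exact hu.trans (mul_le_mul_of_nonneg_right (le_max_left _ _) tnn)



end HPMaux

/-- For `q > 0`, with `h₊ w k := q ∫_k^w |s|^(q-1) (s-k)₊ ds` and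
`h₋ w k := -q ∫_k^w |s|^(q-1) (s-k)₋ ds`, there is `γ = γ(q) > 0` such that for all `a b`:
`(1/γ)(|a|+|b|)^(q-1)(a-b)₊² ≤ h₊ a b ≤ γ (|a|+|b|)^(q-1)(a-b)₊²` and similarly for `h₋`. -/
theorem h_plus_minus_two_sided_bound (q : ℝ) (hq : 0 < q) :
    ∃ γ : ℝ, 0 < γ ∧ ∀ a b : ℝ,
      ((1 / γ) * ((|a| + |b|) ^ (q - 1) * (max (a - b) 0) ^ 2)
          ≤ q * ∫ s in b..a, |s| ^ (q - 1) * max (s - b) 0 ∧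
        q * (∫ s in b..a, |s| ^ (q - 1) * max (s - b) 0)
          ≤ γ * ((|a| + |b|) ^ (q - 1) * (max (a - b) 0) ^ 2)) ∧
      ((1 / γ) * ((|a| + |b|) ^ (q - 1) * (max (b - a) 0) ^ 2)
          ≤ -(q * ∫ s in b..a, |s| ^ (q - 1) * max (b - s) 0) ∧
        -(q * ∫ s in b..a, |s| ^ (q - 1) * max (b - s) 0)
          ≤ γ * ((|a| + |b|) ^ (q - 1) * (max (b - a) 0) ^ 2)) := by
  obtain ⟨γ, hγ, hmain⟩ := HPMaux.main_pair hq
  refine ⟨γ, hγ, fun a b => ⟨hmain a b, ?_⟩⟩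
  have hsub : -(q * ∫ s in b..a, |s| ^ (q - 1) * max (b - s) 0)
      = q * ∫ s in (-b)..(-a), |s| ^ (q - 1) * max (s - -b) 0 := by
    have h3 := integral_comp_neg (a := b) (b := a)
      (f := fun t : ℝ => |t| ^ (q - 1) * max (t - -b) 0)
    simp only [abs_neg, neg_sub_neg] at h3
    rw [h3, integral_symm (-b) (-a)]
    ring
  have H := hmain (-a) (-b)
  rw [abs_neg, abs_neg, neg_sub_neg] at H
  rw [hsub]
  exact H
end

section
/- Let {Y_j}_{j=0}^∞ be a sequence of positive real numbers, and let K > 1, b > 1 and δ > 0 be constants such that Y_{j+1} ≤ K b^j Y_j^{1+δ} for every j = 0, 1, 2, …. If Y_0 ≤ K^{−1/δ} b^{−1/δ²}, then Y_j → 0 as j → ∞. -/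
/-- Fast geometric convergence lemma: if `Y_{j+1} ≤ K b^j Y_j^(1+δ)` with `K, b > 1`, `δ > 0`,
and `Y_0 ≤ K^(-1/δ) b^(-1/δ²)`, then `Y_j → 0`. -/
theorem fast_geometric_convergence (Y : ℕ → ℝ) (K b δ : ℝ)
    (hK : 1 < K) (hb : 1 < b) (hδ : 0 < δ)
    (hpos : ∀ j, 0 < Y j)
    (hrec : ∀ j : ℕ, Y (j + 1) ≤ K * b ^ j * Y j ^ (1 + δ))
    (h0 : Y 0 ≤ K ^ (-1 / δ) * b ^ (-1 / δ ^ 2)) :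
    Filter.Tendsto Y Filter.atTop (nhds 0) := by
  have hK0 : (0:ℝ) < K := lt_trans one_pos hK
  have hb0 : (0:ℝ) < b := lt_trans one_pos hb
  have key : ∀ j : ℕ, Y j ≤ K ^ (-1 / δ) * b ^ (-(j:ℝ)/δ - 1/δ^2) := by
    intro j
    induction j with
    | zero =>
      have : -(0:ℕ)/δ - 1/δ^2 = -1/δ^2 := by push_cast; ring
      rw [this]; exact h0
    | succ j ih =>
      have hYj := (hpos j).le
      have step : Y (j+1) ≤ K * b ^ j *
          (K ^ (-1 / δ) * b ^ (-(j:ℝ)/δ - 1/δ^2)) ^ (1 + δ) := by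
        refine (hrec j).trans ?_
        have : Y j ^ (1+δ) ≤ (K ^ (-1 / δ) * b ^ (-(j:ℝ)/δ - 1/δ^2)) ^ (1+δ) :=
          Real.rpow_le_rpow hYj ih (by positivity)
        have hKb : (0:ℝ) ≤ K * b ^ j := by positivity
        exact mul_le_mul_of_nonneg_left this hKb
      refine step.trans (le_of_eq ?_)
      rw [Real.mul_rpow (by positivity) (by positivity),
        ← Real.rpow_natCast b j,
        ← Real.rpow_mul hK0.le, ← Real.rpow_mul hb0.le]
      rw [show K * b ^ ((j:ℝ)) * (K ^ (-1 / δ * (1 + δ)) * b ^ ((-(j:ℝ)/δ - 1/δ^2) * (1+δ)))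
          = (K ^ (1:ℝ) * K ^ (-1 / δ * (1 + δ))) * (b ^ ((j:ℝ)) * b ^ ((-(j:ℝ)/δ - 1/δ^2) * (1+δ)))
          by rw [Real.rpow_one]; ring]
      rw [← Real.rpow_add hK0, ← Real.rpow_add hb0]
      congr 1
      · congr 1
        field_simp
        ring
      · congr 1
        push_cast
        field_simp
        ring
  have hr : b ^ (-(1:ℝ)/δ) < 1 := by
    apply Real.rpow_lt_one_of_one_lt_of_neg hb
    exact div_neg_of_neg_of_pos (by norm_num) hδ
  have hr0 : (0:ℝ) ≤ b ^ (-(1:ℝ)/δ) := (Real.rpow_pos_of_pos hb0 _).le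
  have htend : Filter.Tendsto
      (fun j : ℕ => (K ^ (-1 / δ) * b ^ (-1/δ^2)) * (b ^ (-(1:ℝ)/δ)) ^ j)
      Filter.atTop (nhds 0) := by
    have := (tendsto_pow_atTop_nhds_zero_of_lt_one hr0 hr).const_mul
      (K ^ (-1 / δ) * b ^ (-1/δ^2))
    simpa using this
  refine squeeze_zero (fun j => (hpos j).le) (fun j => ?_) htend
  refine (key j).trans (le_of_eq ?_)
  rw [← Real.rpow_natCast (b ^ (-(1:ℝ)/δ)) j, ← Real.rpow_mul hb0.le,
    mul_assoc, ← Real.rpow_add hb0]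
  congr 1
  ring
end

section
/- Let p > 1 and q ≥ p − 1 with q > 0. There exists a constant γ > 0 depending only on p and q such that for every c ∈ (0,1), every k > 0 and every u ≥ 0, ∫_0^{(k−u)₊} q (k − s)^{q−1} (k − s + ck)^{−(p−1)} ds ≤ γ k^{q+1−p} ln( (1+c)/c ). -/
open intervalIntegral

/-- For `1 < p`, `p - 1 ≤ q`, `q > 0`: there is `γ = γ(p,q) > 0` such that for every
`c ∈ (0,1)`, `k > 0` and `u ≥ 0`,
`∫_0^{(k-u)₊} q (k-s)^(q-1) (k-s+ck)^(-(p-1)) ds ≤ γ k^(q+1-p) ln((1+c)/c)`. -/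
theorem Phi_k_bound (p q : ℝ) (hp : 1 < p) (hpq : p - 1 ≤ q) (hq : 0 < q) :
    ∃ γ : ℝ, 0 < γ ∧ ∀ c k u : ℝ, c ∈ Set.Ioo (0 : ℝ) 1 → 0 < k → 0 ≤ u →
      (∫ s in (0 : ℝ)..(max (k - u) 0),
          q * (k - s) ^ (q - 1) * (k - s + c * k) ^ (-(p - 1)))
        ≤ γ * k ^ (q + 1 - p) * Real.log ((1 + c) / c) := by
  have hlog2 : 0 < Real.log 2 := Real.log_pos (by norm_num)
  have hp1 : (0:ℝ) < p - 1 := by linarith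
  have hqp : (0:ℝ) ≤ q + 1 - p := by linarith
  refine ⟨1 / Real.log 2 + (p - 1) * 2 ^ (q + 1 - p), by positivity, ?_⟩
  rintro c k u ⟨hc0, hc1⟩ hk hu
  set m := max (k - u) 0 with hmdef
  have hm0 : (0:ℝ) ≤ m := le_max_right _ _
  have hmk : m ≤ k := max_le (by linarith) hk.le
  have hck : 0 < c * k := mul_pos hc0 hk
  have hckk : c * k ≤ k := by nlinarith
  set X := q + 1 - p with hX
  set C := (p - 1) * (2 * k) ^ X with hC
  have hCpos : 0 < C := by
    have : (0:ℝ) < (2*k) ^ X := Real.rpow_pos_of_pos (by linarith) _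
    positivity
  set L := Real.log ((1 + c) / c) with hL
  have hL2 : Real.log 2 ≤ L := by
    apply Real.log_le_log (by norm_num)
    rw [le_div_iff₀ hc0]; linarith
  have hLpos : 0 < L := lt_of_lt_of_le hlog2 hL2
  have hKpos : 0 < k ^ X := Real.rpow_pos_of_pos hk _
  -- rewrite the exponent
  have hexp : -(p - 1) = 1 - p := by ring
  rw [hexp]
  set φ : ℝ → ℝ := fun s => q * (k - s) ^ (q - 1) * (k - s + c * k) ^ (1 - p) with hφ
  set F : ℝ → ℝ := fun s => -((k - s) ^ q * (k - s + c * k) ^ (1 - p))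
      - C * Real.log (k - s + c * k) with hFdef
  set F' : ℝ → ℝ := fun s => q * (k - s) ^ (q - 1) * (k - s + c * k) ^ (1 - p)
      - (p - 1) * (k - s) ^ q * (k - s + c * k) ^ (-p) + C / (k - s + c * k) with hF'def
  have hBpos : ∀ s ∈ Set.Icc (0:ℝ) m, 0 < k - s + c * k := by
    intro s hs
    have := hs.2
    have : s ≤ k := le_trans this hmk
    linarith
  -- integrability of φ on [0, m]
  have hint : IntervalIntegrable φ MeasureTheory.volume 0 m := by
    have h1 : IntervalIntegrable (fun x : ℝ => x ^ (q - 1)) MeasureTheory.volume k (k - m) :=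
      intervalIntegral.intervalIntegrable_rpow' (by linarith)
    have h2 := h1.comp_sub_left k
    simp only [sub_self, sub_sub_cancel] at h2
    have h3 : ContinuousOn (fun s : ℝ => q * (k - s + c * k) ^ (1 - p)) (Set.uIcc 0 m) := by
      apply ContinuousOn.const_smul (c := q) ?_ |>.congr ?_
      · exact fun s => (k - s + c * k) ^ (1 - p)
      · apply ContinuousOn.rpow_const
        · exact ((continuous_const.sub continuous_id).add continuous_const).continuousOn
        · intro x hx
          rw [Set.uIcc_of_le hm0] at hx
          exact Or.inl (hBpos x hx).ne'
      · intro x _; simp [smul_eq_mul]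
    have h4 := h2.mul_continuousOn h3
    have heq : (fun x : ℝ => (k - x) ^ (q - 1) * (q * (k - x + c * k) ^ (1 - p))) = φ := by
      funext s; simp only [hφ]; ring
    rwa [heq] at h4
  have hintOn : MeasureTheory.IntegrableOn φ (Set.Icc 0 m) MeasureTheory.volume :=
    (intervalIntegrable_iff_integrableOn_Icc_of_le hm0).mp hint
  -- continuity of F on [0, m]
  have hFcont : ContinuousOn F (Set.Icc 0 m) := by
    have c1 : ContinuousOn (fun s : ℝ => k - s) (Set.Icc 0 m) :=
      (continuous_const.sub continuous_id).continuousOn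
    have c2 : ContinuousOn (fun s : ℝ => k - s + c * k) (Set.Icc 0 m) :=
      c1.add continuousOn_const
    have c3 : ContinuousOn (fun s : ℝ => (k - s) ^ q) (Set.Icc 0 m) :=
      c1.rpow_const (fun x _ => Or.inr hq.le)
    have c4 : ContinuousOn (fun s : ℝ => (k - s + c * k) ^ (1 - p)) (Set.Icc 0 m) :=
      c2.rpow_const (fun x hx => Or.inl (hBpos x hx).ne')
    have c5 : ContinuousOn (fun s : ℝ => Real.log (k - s + c * k)) (Set.Icc 0 m) :=
      c2.log (fun x hx => (hBpos x hx).ne')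
    exact ((c3.mul c4).neg).sub (c5.const_smul C |>.congr (fun x _ => by simp [smul_eq_mul]))
  -- derivative of F on (0, m)
  have hFderiv : ∀ x ∈ Set.Ioo (0:ℝ) m, HasDerivWithinAt F (F' x) (Set.Ioi x) x := by
    intro x hx
    have hx1 : 0 < k - x := by
      have := hx.2; have : x < k := lt_of_lt_of_le this hmk; linarith
    have hx2 : 0 < k - x + c * k := by linarith
    have d1 : HasDerivAt (fun s : ℝ => k - s) (-1) x := by
      simpa using (hasDerivAt_id x).const_sub k
    have d2 := d1.rpow_const (p := q) (Or.inl hx1.ne')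
    have d3 : HasDerivAt (fun s : ℝ => k - s + c * k) (-1) x := d1.add_const _
    have d4 := d3.rpow_const (p := 1 - p) (Or.inl hx2.ne')
    have d5 := d2.mul d4
    have d6 : HasDerivAt (fun s : ℝ => Real.log (k - s + c * k)) (-1 / (k - x + c * k)) x :=
      d3.log hx2.ne'
    have dF := (d5.neg).sub (d6.const_mul C)
    apply HasDerivAt.hasDerivWithinAt
    convert dF using 1
    · rfl
    rw [show (1:ℝ) - p - 1 = -p by ring]
    simp only [hF'def]
    ring
  -- pointwise bound φ ≤ F' on (0, m)
  have hφF' : ∀ x ∈ Set.Ioo (0:ℝ) m, φ x ≤ F' x := by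
    intro x hx
    have hx1 : 0 < k - x := by
      have := hx.2; have : x < k := lt_of_lt_of_le this hmk; linarith
    have hx2 : 0 < k - x + c * k := by linarith
    set B := k - x + c * k with hB
    have hB2k : B ≤ 2 * k := by
      simp only [hB]; linarith [hx.1]
    have e1 : (k - x) ^ q ≤ B ^ q :=
      Real.rpow_le_rpow hx1.le (by simp only [hB]; linarith) hq.le
    have e2 : B ^ q * B ^ (-p) = B ^ (q - p) := by
      rw [← Real.rpow_add hx2]; congr 1
    have e3 : B ^ (q - p) = B ^ X * B⁻¹ := by
      rw [← Real.rpow_neg_one B, ← Real.rpow_add hx2]; congr 1; simp only [hX]; ring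
    have e4 : B ^ X ≤ (2 * k) ^ X := Real.rpow_le_rpow hx2.le hB2k hqp
    have e5 : (k - x) ^ q * B ^ (-p) ≤ B ^ q * B ^ (-p) :=
      mul_le_mul_of_nonneg_right e1 (Real.rpow_nonneg hx2.le _)
    have e6 : (p - 1) * ((k - x) ^ q * B ^ (-p)) ≤ (p - 1) * ((2 * k) ^ X * B⁻¹) := by
      apply mul_le_mul_of_nonneg_left _ hp1.le
      calc (k - x) ^ q * B ^ (-p) ≤ B ^ q * B ^ (-p) := e5
        _ = B ^ X * B⁻¹ := by rw [e2, e3]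
        _ ≤ (2 * k) ^ X * B⁻¹ := by
            apply mul_le_mul_of_nonneg_right e4 (inv_nonneg.mpr hx2.le)
    simp only [hφ, hF'def, hC]
    have : (p - 1) * (k - x) ^ q * B ^ (-p) ≤ (p - 1) * (2 * k) ^ X / B := by
      rw [div_eq_mul_inv, mul_assoc, mul_assoc]
      simpa [mul_assoc] using e6
    simp only [hB] at this
    linarith
  -- apply the FTC comparison
  have key : (∫ s in (0:ℝ)..m, φ s) ≤ F m - F 0 :=
    intervalIntegral.integral_le_sub_of_hasDeriv_right_of_le hm0 hFcont hFderiv hintOn hφF'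
  -- bound F m - F 0
  have hBm : 0 < k - m + c * k := by linarith
  have hB0 : 0 < k + c * k := by linarith
  have hFm0 : F m - F 0 = k ^ q * (k + c * k) ^ (1 - p) - (k - m) ^ q * (k - m + c * k) ^ (1 - p)
      + C * (Real.log (k + c * k) - Real.log (k - m + c * k)) := by
    simp only [hFdef, sub_zero]
    ring
  have hA : 0 ≤ (k - m) ^ q * (k - m + c * k) ^ (1 - p) :=
    mul_nonneg (Real.rpow_nonneg (by linarith) _) (Real.rpow_nonneg hBm.le _)
  have hlogs : Real.log (k + c * k) - Real.log (k - m + c * k) ≤ L := by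
    have h1 : Real.log (c * k) ≤ Real.log (k - m + c * k) :=
      Real.log_le_log hck (by linarith)
    have h2 : Real.log (k + c * k) - Real.log (c * k) = L := by
      rw [hL, ← Real.log_div hB0.ne' hck.ne']
      congr 1
      rw [show k + c * k = (1 + c) * k by ring]
      rw [mul_div_mul_right _ _ hk.ne']
    linarith
  have hmain : k ^ q * (k + c * k) ^ (1 - p) ≤ k ^ X := by
    have h1 : (k + c * k) ^ (1 - p) = (1 + c) ^ (1 - p) * k ^ (1 - p) := by
      rw [show k + c * k = (1 + c) * k by ring, Real.mul_rpow (by linarith) hk.le]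
    have h2 : (1 + c) ^ (1 - p) ≤ 1 :=
      Real.rpow_le_one_of_one_le_of_nonpos (by linarith) (by linarith)
    have h3 : k ^ q * ((1 + c) ^ (1 - p) * k ^ (1 - p)) ≤ k ^ q * (1 * k ^ (1 - p)) := by
      apply mul_le_mul_of_nonneg_left _ (Real.rpow_nonneg hk.le _)
      apply mul_le_mul_of_nonneg_right h2 (Real.rpow_nonneg hk.le _)
    rw [h1]
    calc k ^ q * ((1 + c) ^ (1 - p) * k ^ (1 - p)) ≤ k ^ q * (1 * k ^ (1 - p)) := h3
      _ = k ^ q * k ^ (1 - p) := by ring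
      _ = k ^ X := by rw [← Real.rpow_add hk]; congr 1; simp only [hX]; ring
  have hCk : C = (p - 1) * 2 ^ X * k ^ X := by
    rw [hC, Real.mul_rpow (by norm_num) hk.le]; ring
  have hstep : F m - F 0 ≤ k ^ X + (p - 1) * 2 ^ X * k ^ X * L := by
    rw [hFm0]
    have := mul_le_mul_of_nonneg_left hlogs hCpos.le
    nlinarith [this]
  have hfirst : k ^ X ≤ 1 / Real.log 2 * k ^ X * L := by
    rw [div_mul_eq_mul_div, div_mul_eq_mul_div, le_div_iff₀ hlog2, one_mul]
    calc k ^ X * Real.log 2 ≤ k ^ X * L := mul_le_mul_of_nonneg_left hL2 hKpos.le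
      _ = k ^ X * L * 1 := by ring
      _ ≤ k ^ X * L := by ring_nf; exact le_refl _
  calc (∫ s in (0:ℝ)..m, φ s) ≤ F m - F 0 := key
    _ ≤ k ^ X + (p - 1) * 2 ^ X * k ^ X * L := hstep
    _ ≤ 1 / Real.log 2 * k ^ X * L + (p - 1) * 2 ^ X * k ^ X * L := by linarith
    _ = (1 / Real.log 2 + (p - 1) * 2 ^ X) * k ^ X * L := by ring
end
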